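/- For the discrete operators A_h, A_h* on a periodic mesh, the commutator satisfies pointwise ([A_h, A_h*]u)_j = −((E_{j+1} − E_{j−1})/(4Δx_j))(u_{j+1} + u_{j−1}) − ((E_{j+1} − 2E_j + E_{j−1})/(4Δx_j))(u_{j+1} − u_{j−1}). -/
import Mathlib


/-- Discrete centered operator `(A_h u)_j = √T₀[(u_{j+1} − u_{j−1})/(2Δx_j) − (E_j/(2T₀))u_j]`
on a periodic mesh indexed by `ZMod N`. -/
noncomputable def Ah {N : ℕ} (T₀ : ℝ) (Δx E u : ZMod N → ℝ) : ZMod N → ℝ :=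
  fun j => Real.sqrt T₀ * ((u (j + 1) - u (j - 1)) / (2 * Δx j) - E j / (2 * T₀) * u j)

/-- Discrete adjoint operator
`(A_h* u)_j = −√T₀[(u_{j+1} − u_{j−1})/(2Δx_j) + (E_j/(2T₀))u_j]`. -/
noncomputable def AhStar {N : ℕ} (T₀ : ℝ) (Δx E u : ZMod N → ℝ) : ZMod N → ℝ :=
  fun j => -(Real.sqrt T₀ * ((u (j + 1) - u (j - 1)) / (2 * Δx j) + E j / (2 * T₀) * u j))

/-- pointwise formula for the discrete commutator
`[A_h, A_h*] = A_h A_h* − A_h* A_h`: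
`([A_h, A_h*]u)_j = −((E_{j+1} − E_{j−1})/(4Δx_j))(u_{j+1} + u_{j−1})
  − ((E_{j+1} − 2E_j + E_{j−1})/(4Δx_j))(u_{j+1} − u_{j−1})`. -/
theorem discrete_commutator_formula
    {N : ℕ} [NeZero N]
    (T₀ : ℝ) (hT₀ : 0 < T₀)
    (Δx : ZMod N → ℝ) (hΔx : ∀ j, 0 < Δx j)
    (E u : ZMod N → ℝ) :
    ∀ j : ZMod N,
      Ah T₀ Δx E (AhStar T₀ Δx E u) j - AhStar T₀ Δx E (Ah T₀ Δx E u) j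
        = -((E (j + 1) - E (j - 1)) / (4 * Δx j)) * (u (j + 1) + u (j - 1))
          - (E (j + 1) - 2 * E j + E (j - 1)) / (4 * Δx j) * (u (j + 1) - u (j - 1)) := by
  intro j
  have hs : Real.sqrt T₀ * Real.sqrt T₀ = T₀ := Real.mul_self_sqrt hT₀.le
  simp only [Ah, AhStar, add_sub_cancel_right, sub_add_cancel_right, sub_sub_cancel,
    sub_add_cancel_left]
  have h1 : Δx j ≠ 0 := (hΔx j).ne'
  have h2 : Δx (j+1) ≠ 0 := (hΔx (j+1)).ne'
  have h3 : Δx (j-1) ≠ 0 := (hΔx (j-1)).ne'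
  have hT : T₀ ≠ 0 := hT₀.ne'
  field_simp
  ring_nf
  rw [Real.sq_sqrt hT₀.le]; ring
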